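/- Let f : K → ℝ satisfy f k ≥ 0 for all k ∈ K. Then f is an equilibrium (J_k(f) = 0 for all k) if and only if for all routes k, j with od k = od j, f k > 0 and f j > 0 imply c_k(f) = c_j(f); i.e., all used routes of the same O-D pair share the same travel time. -/
import Mathlib


open Finset

/-- Link flow on arc `a` induced by route flows `f`. -/
noncomputable def linkFlow {A K : Type*} [Fintype K] (δ : A → K → ℝ)
    (f : K → ℝ) (a : A) : ℝ :=
  ∑ k, δ a k * f k

/-- Travel time on route `k` induced by route flows `f`. -/
noncomputable def routeTime {A K : Type*} [Fintype A] [Fintype K] (δ : A → K → ℝ)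
    (t : A → ℝ → ℝ) (f : K → ℝ) (k : K) : ℝ :=
  ∑ a, t a (linkFlow δ f a) * δ a k

/-- O-D FIFO violation of route `k` at route-flow state `f`. -/
noncomputable def fifoViolation {A W K : Type*} [Fintype A] [Fintype K] [DecidableEq W]
    (od : K → W) (δ : A → K → ℝ) (t : A → ℝ → ℝ) (f : K → ℝ) (k : K) : ℝ :=
  f k * ∑ j ∈ univ.filter (fun j => od j = od k),
    (routeTime δ t f k - routeTime δ t f j) * f j

theorem equilibrium_iff_used_routes_equal_time {A W K : Type*} [Fintype A] [Fintype W] [Fintype K] [DecidableEq W]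
    (od : K → W) (δ : A → K → ℝ) (hδ : ∀ a k, δ a k = 0 ∨ δ a k = 1)
    (t : A → ℝ → ℝ)
    (f : K → ℝ) (hf : ∀ k, 0 ≤ f k) :
    (∀ k, fifoViolation od δ t f k = 0) ↔
      (∀ k j, od k = od j → 0 < f k → 0 < f j →
        routeTime δ t f k = routeTime δ t f j) := by
  constructor
  · intro h k j hod hk hj
    set c := routeTime δ t f with hc
    set T := ∑ i ∈ univ.filter (fun i => od i = od k), f i with hT
    set U := ∑ i ∈ univ.filter (fun i => od i = od k), c i * f i with hU
    have hset : univ.filter (fun i => od i = od j) = univ.filter (fun i => od i = od k) := by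
      simp [hod]
    have hTpos : 0 < T := by
      apply Finset.sum_pos' (fun i _ => hf i)
      exact ⟨k, by simp, hk⟩
    have key : ∀ m, 0 < f m →
        (∑ i ∈ univ.filter (fun i => od i = od k), (c m - c i) * f i = 0) →
        c m * T = U := by
      intro m hm hs
      simp only [sub_mul] at hs
      rw [Finset.sum_sub_distrib, ← Finset.mul_sum, sub_eq_zero] at hs
      exact hs
    have hk2 : c k * T = U := by
      have := h k
      unfold fifoViolation at this
      rcases mul_eq_zero.mp this with h0 | h0
      · exact absurd h0 (ne_of_gt hk)
      · exact key k hk h0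
    have hj2 : c j * T = U := by
      have := h j
      unfold fifoViolation at this
      rcases mul_eq_zero.mp this with h0 | h0
      · exact absurd h0 (ne_of_gt hj)
      · rw [hset] at h0
        exact key j hj h0
    exact mul_right_cancel₀ (ne_of_gt hTpos) (hk2.trans hj2.symm)
  · intro h k
    unfold fifoViolation
    rcases (hf k).eq_or_lt with h0 | h0
    · rw [← h0, zero_mul]
    · rw [mul_eq_zero]
      right
      apply Finset.sum_eq_zero
      intro i hi
      rcases (hf i).eq_or_lt with h1 | h1
      · rw [← h1, mul_zero]
      · have hod : od i = od k := (Finset.mem_filter.mp hi).2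
        rw [h k i hod.symm h0 h1, sub_self, zero_mul]
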